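/- Let n ≥ 1, let a₁ < a₂ < ⋯ < aₙ be positive integers whose nonempty subsets have pairwise distinct element sums, and let m₁, …, m_{n−1} be distinct positive integers. Then the number of permutations σ of {1, …, n} for which some partial sum a_{σ(1)} + ⋯ + a_{σ(l)} with 1 ≤ l ≤ n−1 equals some m_i is at most (n−1)!·(n−1); consequently at least (n−1)! permutations σ have the property that all partial sums a_{σ(1)} + ⋯ + a_{σ(l)}, 1 ≤ l ≤ n−1, avoid {m₁, …, m_{n−1}}. -/

import Mathlib

lemma lem_choose (n l : ℕ) (h1 : 1 ≤ l) (h2 : l ≤ n - 1) : n ≤ n.choose l := by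
  have hln : l ≤ n := le_trans h2 (Nat.sub_le n 1)
  have key : ∀ k, 1 ≤ k → k ≤ n / 2 → n ≤ n.choose k := by
    intro k hk1 hk2
    induction k with
    | zero => omega
    | succ j ih =>
      rcases Nat.eq_or_lt_of_le hk1 with h | h
      · simpa [← h] using (Nat.choose_one_right n).ge
      · have hj : n ≤ n.choose j := ih (by omega) (by omega)
        exact hj.trans (Nat.choose_le_succ_of_lt_half_left (by omega))
  by_cases hc : l ≤ n / 2
  · exact key l h1 hc
  · have h3 : 1 ≤ n - l := by omega
    have h4 : n - l ≤ n / 2 := by omega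
    have := key (n - l) h3 h4
    rwa [Nat.choose_symm hln] at this

lemma lem_fact (n l : ℕ) (h1 : 1 ≤ l) (h2 : l ≤ n - 1) :
    l.factorial * (n - l).factorial ≤ (n - 1).factorial := by
  have hln : l ≤ n := le_trans h2 (Nat.sub_le n 1)
  have hch := Nat.choose_mul_factorial_mul_factorial hln
  have hn1 : 1 ≤ n := le_trans h1 hln
  have hfac : n.factorial = n * (n - 1).factorial := by
    conv_lhs => rw [show n = (n - 1) + 1 by omega]
    rw [Nat.factorial_succ]
    congr 1; omega
  have hle : n * (l.factorial * (n - l).factorial) ≤ n * (n - 1).factorial := by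
    calc n * (l.factorial * (n - l).factorial)
        ≤ n.choose l * (l.factorial * (n - l).factorial) :=
          Nat.mul_le_mul_right _ (lem_choose n l h1 h2)
      _ = n.factorial := by rw [← hch]; ring
      _ = n * (n - 1).factorial := hfac
  exact Nat.le_of_mul_le_mul_left hle (by omega)

lemma fiber_bound (n : ℕ) (hn : 1 ≤ n) (a : Fin n → ℤ)
    (hsums : ∀ S T : Finset (Fin n), S.Nonempty → T.Nonempty → S ≠ T →
      (∑ i ∈ S, a i) ≠ (∑ i ∈ T, a i)) (c : ℤ) :
    Nat.card {σ : Equiv.Perm (Fin n) //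
      ∃ l : ℕ, 1 ≤ l ∧ l ≤ n - 1 ∧
        (∑ k ∈ Finset.univ.filter (fun k : Fin n => (k : ℕ) < l), a (σ k)) = c}
      ≤ (n - 1).factorial := by
  classical
  set P : Equiv.Perm (Fin n) → Prop := fun σ =>
    ∃ l : ℕ, 1 ≤ l ∧ l ≤ n - 1 ∧
      (∑ k ∈ Finset.univ.filter (fun k : Fin n => (k : ℕ) < l), a (σ k)) = c with hP
  by_cases hne : ∃ σ, P σ
  · obtain ⟨σ₀, l₀, hl₀1, hl₀2, hsum₀⟩ := hne
    set L : ℕ → Finset (Fin n) := fun l => Finset.univ.filter (fun k : Fin n => (k : ℕ) < l)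
      with hLdef
    have hLcard : ∀ l, l < n → (L l).card = l := by
      intro l hl
      have : L l = Finset.Iio (⟨l, hl⟩ : Fin n) := by
        ext k; simp [hLdef, Finset.mem_Iio, Fin.lt_def]
      rw [this, Fin.card_Iio]
    have hLne : ∀ l, 1 ≤ l → (L l).Nonempty := by
      intro l hl
      exact ⟨⟨0, by omega⟩, by simp [hLdef]; omega⟩
    set S : Finset (Fin n) := (L l₀).image σ₀ with hSdef
    have hScard : S.card = l₀ := by
      rw [hSdef, Finset.card_image_of_injective _ σ₀.injective, hLcard l₀ (by omega)]
    have hSsum : (∑ i ∈ S, a i) = c := by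
      rw [hSdef, Finset.sum_image (fun x _ y _ h => σ₀.injective h)]
      exact hsum₀
    have hSne : S.Nonempty := (hLne l₀ hl₀1).image σ₀
    -- key: every σ with P σ maps L l₀ onto S
    have hKey : ∀ σ : Equiv.Perm (Fin n), P σ → (L l₀).image σ = S := by
      intro σ ⟨l, hl1, hl2, hsum⟩
      set T : Finset (Fin n) := (L l).image σ with hTdef
      have hTsum : (∑ i ∈ T, a i) = c := by
        rw [hTdef, Finset.sum_image (fun x _ y _ h => σ.injective h)]
        exact hsum
      have hTne : T.Nonempty := (hLne l hl1).image σ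
      have hTS : T = S := by
        by_contra hne'
        exact hsums T S hTne hSne hne' (hTsum.trans hSsum.symm)
      have hll : l = l₀ := by
        have : T.card = l := by
          rw [hTdef, Finset.card_image_of_injective _ σ.injective, hLcard l (by omega)]
        rw [hTS, hScard] at this; omega
      rw [← hll]; exact hTS
    -- injection into pairs of equivalences
    have hcard1 : Fintype.card {x : Fin n // x ∈ L l₀} = l₀ := by
      rw [Fintype.card_coe, hLcard l₀ (by omega)]
    have hcard2 : Fintype.card {x : Fin n // x ∈ S} = l₀ := by
      rw [Fintype.card_coe, hScard]
    have hcard3 : Fintype.card {x : Fin n // x ∉ L l₀} = n - l₀ := by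
      rw [Fintype.card_subtype_compl, hcard1, Fintype.card_fin]
    have hcard4 : Fintype.card {x : Fin n // x ∉ S} = n - l₀ := by
      rw [Fintype.card_subtype_compl, hcard2, Fintype.card_fin]
    have hmem1 : ∀ (σp : {σ : Equiv.Perm (Fin n) // P σ}) (x : {x : Fin n // x ∈ L l₀}),
        σp.1 x.1 ∈ S := by
      intro σp x
      rw [← hKey σp.1 σp.2]; exact Finset.mem_image_of_mem σp.1 x.2
    have hmem2 : ∀ (σp : {σ : Equiv.Perm (Fin n) // P σ}) (x : {x : Fin n // x ∉ L l₀}),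
        σp.1 x.1 ∉ S := by
      intro σp x hmem
      rw [← hKey σp.1 σp.2] at hmem
      obtain ⟨y, hy, hyx⟩ := Finset.mem_image.mp hmem
      exact x.2 (σp.1.injective hyx ▸ hy)
    have hbij1 : ∀ σp : {σ : Equiv.Perm (Fin n) // P σ},
        Function.Bijective (fun x : {x : Fin n // x ∈ L l₀} =>
          (⟨σp.1 x.1, hmem1 σp x⟩ : {x : Fin n // x ∈ S})) := by
      intro σp
      rw [Fintype.bijective_iff_injective_and_card]
      refine ⟨fun x y hxy => Subtype.ext (σp.1.injective (congrArg Subtype.val hxy)), ?_⟩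
      rw [hcard1, hcard2]
    have hbij2 : ∀ σp : {σ : Equiv.Perm (Fin n) // P σ},
        Function.Bijective (fun x : {x : Fin n // x ∉ L l₀} =>
          (⟨σp.1 x.1, hmem2 σp x⟩ : {x : Fin n // x ∉ S})) := by
      intro σp
      rw [Fintype.bijective_iff_injective_and_card]
      refine ⟨fun x y hxy => Subtype.ext (σp.1.injective (congrArg Subtype.val hxy)), ?_⟩
      rw [hcard3, hcard4]
    have hinj : Function.Injective (fun σp : {σ : Equiv.Perm (Fin n) // P σ} =>
        (Equiv.ofBijective _ (hbij1 σp), Equiv.ofBijective _ (hbij2 σp))) := by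
      intro σp τp h
      have h1 := congrArg Prod.fst h
      have h2 := congrArg Prod.snd h
      refine Subtype.ext (Equiv.ext fun x => ?_)
      by_cases hx : x ∈ L l₀
      · have := congrArg (fun e => (Equiv.toFun e ⟨x, hx⟩).1) h1
        exact this
      · have := congrArg (fun e => (Equiv.toFun e ⟨x, hx⟩).1) h2
        exact this
    calc Nat.card {σ : Equiv.Perm (Fin n) // P σ}
        ≤ Nat.card (({x : Fin n // x ∈ L l₀} ≃ {x : Fin n // x ∈ S}) ×
            ({x : Fin n // x ∉ L l₀} ≃ {x : Fin n // x ∉ S})) :=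
          Nat.card_le_card_of_injective _ hinj
      _ = l₀.factorial * (n - l₀).factorial := by
          have σ₀p : {σ : Equiv.Perm (Fin n) // P σ} := ⟨σ₀, ⟨l₀, hl₀1, hl₀2, hsum₀⟩⟩
          have e1 : {x : Fin n // x ∈ L l₀} ≃ {x : Fin n // x ∈ S} :=
            Equiv.ofBijective _ (hbij1 σ₀p)
          have e2 : {x : Fin n // x ∉ L l₀} ≃ {x : Fin n // x ∉ S} :=
            Equiv.ofBijective _ (hbij2 σ₀p)
          rw [Nat.card_eq_fintype_card, Fintype.card_prod,
            Fintype.card_equiv e1, Fintype.card_equiv e2, hcard1, hcard3]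
      _ ≤ (n - 1).factorial := lem_fact n l₀ hl₀1 hl₀2
  · have : IsEmpty {σ : Equiv.Perm (Fin n) // P σ} := by
      constructor; rintro ⟨σ, hσ⟩; exact hne ⟨σ, hσ⟩
    simp [Nat.card_of_isEmpty]

/-- The counting claim in the proof of Theorem 2 of the paper: if the positive
integers `a 0 < ⋯ < a (n-1)` have pairwise distinct nonempty-subset sums and
`m 0, …, m (n-2)` are distinct positive integers, then at most `(n-1)!·(n-1)`
permutations have some partial sum (of length `1 ≤ l ≤ n-1`) equal to some
`m i`, and consequently at least `(n-1)!` permutations avoid all the `m i`. -/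
theorem theorem2_count (n : ℕ) (hn : 1 ≤ n) (a : Fin n → ℤ)
    (ha_pos : ∀ i, 0 < a i) (ha_mono : StrictMono a)
    (hsums : ∀ S T : Finset (Fin n), S.Nonempty → T.Nonempty → S ≠ T →
      (∑ i ∈ S, a i) ≠ (∑ i ∈ T, a i))
    (m : Fin (n - 1) → ℤ) (hm_pos : ∀ i, 0 < m i) (hm_inj : Function.Injective m) :
    Nat.card {σ : Equiv.Perm (Fin n) //
        ∃ l : ℕ, 1 ≤ l ∧ l ≤ n - 1 ∧ ∃ i : Fin (n - 1),
          (∑ k ∈ Finset.univ.filter (fun k : Fin n => (k : ℕ) < l), a (σ k)) = m i}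
      ≤ Nat.factorial (n - 1) * (n - 1) ∧
    Nat.factorial (n - 1) ≤
      Nat.card {σ : Equiv.Perm (Fin n) //
        ∀ l : ℕ, 1 ≤ l → l ≤ n - 1 → ∀ i : Fin (n - 1),
          (∑ k ∈ Finset.univ.filter (fun k : Fin n => (k : ℕ) < l), a (σ k)) ≠ m i} := by
  classical
  set Q : Equiv.Perm (Fin n) → Prop := fun σ =>
    ∃ l : ℕ, 1 ≤ l ∧ l ≤ n - 1 ∧ ∃ i : Fin (n - 1),
      (∑ k ∈ Finset.univ.filter (fun k : Fin n => (k : ℕ) < l), a (σ k)) = m i with hQ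
  set P : Fin (n - 1) → Equiv.Perm (Fin n) → Prop := fun i σ =>
    ∃ l : ℕ, 1 ≤ l ∧ l ≤ n - 1 ∧
      (∑ k ∈ Finset.univ.filter (fun k : Fin n => (k : ℕ) < l), a (σ k)) = m i with hPdef
  have hPi : ∀ i, Nat.card {σ : Equiv.Perm (Fin n) // P i σ} ≤ (n - 1).factorial :=
    fun i => fiber_bound n hn a hsums (m i)
  have hblocked : Nat.card {σ : Equiv.Perm (Fin n) // Q σ} ≤ (n - 1).factorial * (n - 1) := by
    rw [Nat.card_eq_fintype_card, Fintype.card_subtype]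
    have hsub : Finset.univ.filter Q ⊆
        Finset.univ.biUnion (fun i : Fin (n - 1) => Finset.univ.filter (P i)) := by
      intro σ hσ
      obtain ⟨l, hl1, hl2, i, hi⟩ := (Finset.mem_filter.mp hσ).2
      exact Finset.mem_biUnion.mpr ⟨i, Finset.mem_univ i,
        Finset.mem_filter.mpr ⟨Finset.mem_univ σ, ⟨l, hl1, hl2, hi⟩⟩⟩
    calc (Finset.univ.filter Q).card
        ≤ (Finset.univ.biUnion (fun i : Fin (n - 1) => Finset.univ.filter (P i))).card :=
          Finset.card_le_card hsub
      _ ≤ ∑ i : Fin (n - 1), (Finset.univ.filter (P i)).card := Finset.card_biUnion_le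
      _ ≤ ∑ _i : Fin (n - 1), (n - 1).factorial := by
          refine Finset.sum_le_sum fun i _ => ?_
          have := hPi i
          rwa [Nat.card_eq_fintype_card, Fintype.card_subtype] at this
      _ = (n - 1).factorial * (n - 1) := by
          rw [Finset.sum_const, Finset.card_univ, Fintype.card_fin, smul_eq_mul, mul_comm]
  refine ⟨hblocked, ?_⟩
  have hiff : ∀ σ : Equiv.Perm (Fin n),
      (∀ l : ℕ, 1 ≤ l → l ≤ n - 1 → ∀ i : Fin (n - 1),
        (∑ k ∈ Finset.univ.filter (fun k : Fin n => (k : ℕ) < l), a (σ k)) ≠ m i) ↔ ¬ Q σ := by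
    intro σ
    constructor
    · rintro h ⟨l, hl1, hl2, i, hi⟩; exact h l hl1 hl2 i hi
    · intro h l hl1 hl2 i hi; exact h ⟨l, hl1, hl2, i, hi⟩
  have hcongr : Nat.card {σ : Equiv.Perm (Fin n) //
      ∀ l : ℕ, 1 ≤ l → l ≤ n - 1 → ∀ i : Fin (n - 1),
        (∑ k ∈ Finset.univ.filter (fun k : Fin n => (k : ℕ) < l), a (σ k)) ≠ m i} =
      Nat.card {σ : Equiv.Perm (Fin n) // ¬ Q σ} :=
    Nat.card_congr (Equiv.subtypeEquivRight hiff)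
  rw [hcongr, Nat.card_eq_fintype_card, Fintype.card_subtype_compl]
  have hperm : Fintype.card (Equiv.Perm (Fin n)) = n.factorial := by
    rw [Fintype.card_perm, Fintype.card_fin]
  have hnf : n.factorial = (n - 1).factorial * (n - 1) + (n - 1).factorial := by
    conv_lhs => rw [show n = (n - 1) + 1 by omega]
    rw [Nat.factorial_succ]
    ring
  have hQcard : Fintype.card {σ : Equiv.Perm (Fin n) // Q σ} ≤ (n - 1).factorial * (n - 1) := by
    rw [← Nat.card_eq_fintype_card]; exact hblocked
  omega
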